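/- Let h₁, …, h_{N+1} > 0 satisfy h_j ≥ h_{N+1} for all j = 1, …, N+1. Define v_{N+1} = 1 and v_k = h_{N+1} / (∑_{i=k+1}^{N+1} h_i·v_i) for k = N down to 0. Then for every k = 0, 1, …, N−1: v_k² ≤ 1/(2·(N − k) + 1). -/

import Mathlib

open Finset

/-- Corollary 3 (col_vk_neq): if additionally `h_j ≥ h_{N+1}` for all
`j = 1, …, N+1`, then the backward-recursive weights satisfy
`v_k² ≤ 1/(2(N − k) + 1)` for `k = 0, …, N−1`. -/
theorem recursive_weights_square_bound
    (N : ℕ) (h v : ℕ → ℝ)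
    (hpos : ∀ i, 1 ≤ i → i ≤ N + 1 → 0 < h i)
    (hge : ∀ j, 1 ≤ j → j ≤ N + 1 → h (N + 1) ≤ h j)
    (hvN1 : v (N + 1) = 1)
    (hvrec : ∀ k, k ≤ N → v k = h (N + 1) / ∑ i ∈ Icc (k + 1) (N + 1), h i * v i) :
    ∀ k, k + 1 ≤ N →
      (v k) ^ 2 ≤ 1 / (2 * ((N : ℝ) - (k : ℝ)) + 1) := by
  set S : ℕ → ℝ := fun k => ∑ i ∈ Icc (k + 1) (N + 1), h i * v i with hS
  have hN1 : 0 < h (N + 1) := hpos _ (by omega) le_rfl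
  -- positivity of v
  have vpos : ∀ m k, N + 1 - k ≤ m → k ≤ N + 1 → 0 < v k := by
    intro m
    induction m with
    | zero =>
      intro k h1 h2
      have hk : k = N + 1 := by omega
      subst hk; rw [hvN1]; norm_num
    | succ m ih =>
      intro k h1 h2
      rcases eq_or_lt_of_le h2 with rfl | hk
      · rw [hvN1]; norm_num
      · have hkN : k ≤ N := by omega
        rw [hvrec k hkN]
        apply div_pos hN1
        apply Finset.sum_pos
        · intro i hi
          simp only [mem_Icc] at hi
          exact mul_pos (hpos i (by omega) hi.2) (ih i (by omega) hi.2)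
        · exact ⟨N + 1, by simp [mem_Icc]; omega⟩
  have vpos' : ∀ k, k ≤ N + 1 → 0 < v k := fun k hk => vpos (N + 1 - k) k le_rfl hk
  have Spos : ∀ k, k ≤ N → 0 < S k := by
    intro k hk
    apply Finset.sum_pos
    · intro i hi
      simp only [mem_Icc] at hi
      exact mul_pos (hpos i (by omega) hi.2) (vpos' i hi.2)
    · exact ⟨N + 1, by simp [mem_Icc]; omega⟩
  have hsplit : ∀ k, k + 1 ≤ N + 1 → S k = h (k + 1) * v (k + 1) + S (k + 1) := by
    intro k hk
    have hins : Icc (k + 1) (N + 1) = insert (k + 1) (Icc (k + 1 + 1) (N + 1)) := by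
      rw [Finset.Icc_add_one_left_eq_Ioc (k + 1), Finset.Ioc_insert_left hk]
    simp only [hS]
    rw [hins, Finset.sum_insert (by simp)]
  -- main lower bound on S
  have Sbound : ∀ m k, N - k ≤ m → k ≤ N →
      h (N + 1) ^ 2 * (2 * ((N : ℝ) - (k : ℝ)) + 1) ≤ (S k) ^ 2 := by
    intro m
    induction m with
    | zero =>
      intro k h1 h2
      have hk : k = N := by omega
      have hSN : S N = h (N + 1) := by simp [hS, hvN1]
      rw [hk, hSN]
      nlinarith [hN1]
    | succ m ih =>
      intro k h1 h2
      rcases eq_or_lt_of_le h2 with hkeq | hk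
      · have hSN : S N = h (N + 1) := by simp [hS, hvN1]
        rw [hkeq, hSN]; nlinarith [hN1]
      · have hk1N : k + 1 ≤ N := by omega
        have IH := ih (k + 1) (by omega) hk1N
        have hT : 0 < S (k + 1) := Spos _ hk1N
        have hv1 : 0 < v (k + 1) := vpos' _ (by omega)
        have hvT : v (k + 1) * S (k + 1) = h (N + 1) := by
          rw [hvrec (k + 1) hk1N]
          field_simp [hS]
          exact div_self (ne_of_gt hT)
        have hge' : h (N + 1) ≤ h (k + 1) := hge (k + 1) (by omega) (by omega)
        rw [hsplit k (by omega)]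
        push_cast at IH ⊢
        nlinarith [mul_nonneg (mul_nonneg (sub_nonneg.2 hge') hv1.le) hT.le,
          sq_nonneg (h (k + 1) * v (k + 1)), mul_pos hv1 hT, sq_nonneg (v (k + 1))]
  intro k hk
  have hkN : k ≤ N := by omega
  have key := Sbound (N - k) k le_rfl hkN
  have hSk : 0 < S k := Spos k hkN
  have hc : (0 : ℝ) < 2 * ((N : ℝ) - (k : ℝ)) + 1 := by
    have : (k : ℝ) ≤ (N : ℝ) := by exact_mod_cast hkN
    linarith
  rw [hvrec k hkN]
  rw [div_pow, div_le_div_iff₀ (by positivity) hc]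
  nlinarith [key]
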